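/- Assume the m codes GRS_r(x,y)^{(q^0)}, …, GRS_r(x,y)^{(q^{m−1})} are in direct sum in F_{q^m}^n, and let B be an ordered basis of the F_{q^m}-span C of the canonical family A of the form B = (b_1,…,b_r, b_1^{(q)},…,b_r^{(q)}, …, b_1^{(q^{m−1})},…,b_r^{(q^{m−1})}), with change-of-basis matrix P (so H_B = P·H_A). Let u_1, u_2 ∈ F_{q^m}^{rm} be nonzero row vectors such that for t = 1, 2 there is j_t ∈ {0,…,m−1} with u_t·(P^{−1})ᵀ·P^{−1}·H_B ∈ GRS_r(x,y)^{(q^{j_t})}. Then there exists a unique l ∈ {0,…,m−1} such that u_1 and u_2^{(q^l)}·S^l correspond to the same GRS code with respect to B, i.e., there is j ∈ {0,…,m−1} with both u_1·(P^{−1})ᵀ·P^{−1}·H_B and (u_2^{(q^l)}·S^l)·(P^{−1})ᵀ·P^{−1}·H_B in GRS_r(x,y)^{(q^j)}. -/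

import Mathlib

open Matrix
open Fin.NatCast
open Fin.CommRing

/-- Componentwise (Schur) product of two vectors. -/
def schur {F : Type*} [Field F] {n : ℕ} (a b : Fin n → F) : Fin n → F :=
  fun t => a t * b t

/-- The matrix code of quadratic relations associated with the ordered family `v`. -/
def Cmat {F : Type*} [Field F] {n : ℕ} {ι : Type*} [Fintype ι] [LinearOrder ι]
    (v : ι → Fin n → F) : Set (Matrix ι ι F) :=
  { M | ∃ c : ι → ι → F,
      (∑ i : ι, ∑ j : ι, (if i ≤ j then c i j • schur (v i) (v j) else 0)) = 0 ∧
      (∀ i j : ι, i < j → M i j = c i j ∧ M j i = c i j) ∧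
      (∀ i : ι, M i i = 2 * c i i) }

/-- Linear order on the index pairs `(j,i)`. -/
noncomputable instance pairLO (m r : ℕ) : LinearOrder (Fin m × Fin r) :=
  LinearOrder.lift' (fun p => finProdFinEquiv p) finProdFinEquiv.injective

/-- The right `r`-cyclic block shift matrix `S`: its block in position `(i,j)`
(with `r×r` blocks) is the identity if `j ≡ i + 1 (mod m)` and zero otherwise. -/
def shiftS (F : Type*) [Field F] (m r : ℕ) [NeZero m] :
    Matrix (Fin m × Fin r) (Fin m × Fin r) F :=
  Matrix.of fun p p' => if p'.1 = p.1 + 1 ∧ p'.2 = p.2 then 1 else 0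

/-- The Frobenius twist `GRS_k(x,y)^{(q^j)}` of the generalized Reed–Solomon code
`GRS_k(x,y)`, as a subset of `F^n`. -/
def GRSfrob {F : Type*} [Field F] {n : ℕ} (q k j : ℕ) (x y : Fin n → F) :
    Set (Fin n → F) :=
  { w | ∃ P : Polynomial F, P.degree < (k : WithBot ℕ) ∧
      w = fun t => (y t * P.eval (x t)) ^ q ^ j }

section AuxLemmas

lemma aux_pow_q_mod {F : Type*} [Field F] [Fintype F] {q m : ℕ}
    (hF : Fintype.card F = q ^ m) (a : F) (s : ℕ) :
    a ^ q ^ s = a ^ q ^ (s % m) := by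
  conv_lhs => rw [← Nat.div_add_mod s m, Nat.add_comm, pow_add, pow_mul, pow_mul, ← hF,
    FiniteField.pow_card_pow]

lemma aux_charP_of_card {F : Type*} [Field F] [Fintype F] {p e m : ℕ} (hp : p.Prime)
    (he : 0 < e) (hm : 0 < m) (hF : Fintype.card F = (p ^ e) ^ m) : CharP F p := by
  obtain ⟨n, hrc, hcard⟩ := FiniteField.card F (ringChar F)
  have : p = ringChar F := by
    have hdvd : p ∣ ringChar F ^ (n : ℕ) := by
      rw [← hcard, hF, ← pow_mul]
      exact dvd_pow_self p (by positivity)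
    exact ((Nat.prime_dvd_prime_iff_eq hp hrc).mp (hp.dvd_of_dvd_pow hdvd))
  rw [this]; exact ringChar.charP F

lemma aux_shiftS_mul {F : Type*} [Field F] {m r nn : ℕ} [NeZero m]
    (M : Matrix (Fin m × Fin r) (Fin nn) F) (p : Fin m × Fin r) (t : Fin nn) :
    (shiftS F m r * M) p t = M (p.1 + 1, p.2) t := by
  rw [Matrix.mul_apply]
  rw [Finset.sum_eq_single (p.1 + 1, p.2)]
  · simp [shiftS]
  · intro b _ hb
    rw [shiftS, Matrix.of_apply, if_neg, zero_mul]
    intro ⟨h1, h2⟩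
    exact hb (Prod.ext h1 h2)
  · simp

lemma aux_shiftS_pow_mul {F : Type*} [Field F] {m r nn : ℕ} [NeZero m]
    (k : ℕ) (M : Matrix (Fin m × Fin r) (Fin nn) F) (p : Fin m × Fin r) (t : Fin nn) :
    (shiftS F m r ^ k * M) p t = M (p.1 + (k : Fin m), p.2) t := by
  induction k generalizing p with
  | zero => simp
  | succ k ih =>
    rw [pow_succ', Matrix.mul_assoc, aux_shiftS_mul, ih]
    congr 2
    push_cast
    ring

lemma aux_shiftS_mul_transpose {F : Type*} [Field F] {m r : ℕ} [NeZero m] :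
    shiftS F m r * (shiftS F m r)ᵀ = 1 := by
  ext p p''
  rw [Matrix.mul_apply]
  rw [Finset.sum_eq_single (p.1 + 1, p.2)]
  · by_cases h : p = p''
    · subst h; simp [shiftS]
    · rw [Matrix.transpose_apply, shiftS, Matrix.of_apply, Matrix.of_apply, if_pos ⟨rfl, rfl⟩,
        if_neg, Matrix.one_apply_ne h, mul_zero]
      intro ⟨h1, h2⟩
      have h1' : p.1 = p''.1 := by
        have := h1
        simp only at this
        exact add_right_cancel this
      have h2' : p.2 = p''.2 := by simp only at h2; exact h2
      exact h (Prod.ext h1' h2')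
  · intro b _ hb
    rw [shiftS, Matrix.of_apply, if_neg, zero_mul]
    intro ⟨h1, h2⟩
    exact hb (Prod.ext h1 h2)
  · simp

end AuxLemmas

/-- Assume the `m` codes `GRS_r(x,y)^{(q^j)}` are in direct sum, let
`B` be a Frobenius-shaped ordered basis of the span `C` of the canonical family `A`,
with change-of-basis matrix `P` (so `H_B = P·H_A`), and let `u₁, u₂` be nonzero row
vectors such that `u_t·(P⁻¹)ᵀ·P⁻¹·H_B ∈ GRS_r(x,y)^{(q^{j_t})}` for some `j_t`. Then
there is a unique `l ∈ {0,…,m−1}` such that `u₁` and `u₂^{(q^l)}·S^l` correspond to the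
same GRS code with respect to `B`. -/
theorem unique_shift_same_GRS
    (q m r nn : ℕ) [NeZero m] (hq : ∃ p e : ℕ, p.Prime ∧ 0 < e ∧ q = p ^ e)
    (hr : 0 < r) (hn : 0 < nn)
    (F : Type*) [Field F] [Fintype F] (hF : Fintype.card F = q ^ m)
    (x y : Fin nn → F) (hx : Function.Injective x) (hy : ∀ t, y t ≠ 0)
    (A : Fin m × Fin r → Fin nn → F)
    (hA : A = fun p t => (x t ^ (p.2 : ℕ) * y t) ^ q ^ (p.1 : ℕ))
    (hAind : LinearIndependent F A)
    (hds : ∀ c : Fin m → Fin nn → F,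
      (∀ j : Fin m, c j ∈ GRSfrob q r (j : ℕ) x y) → ∑ j, c j = 0 → ∀ j, c j = 0)
    (β : Fin r → Fin nn → F)
    (b : Fin m × Fin r → Fin nn → F)
    (hb : b = fun p t => β p.2 t ^ q ^ (p.1 : ℕ))
    (hbind : LinearIndependent F b)
    (hbspan : Submodule.span F (Set.range b) = Submodule.span F (Set.range A))
    (HA HB : Matrix (Fin m × Fin r) (Fin nn) F)
    (hHA : HA = Matrix.of fun p t => A p t)
    (hHB : HB = Matrix.of fun p t => b p t)
    (P : Matrix (Fin m × Fin r) (Fin m × Fin r) F)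
    (hPunit : IsUnit P) (hPchange : HB = P * HA)
    (u₁ u₂ : Fin m × Fin r → F) (hu₁ : u₁ ≠ 0) (hu₂ : u₂ ≠ 0)
    (j₁ j₂ : Fin m)
    (hj₁ : Matrix.vecMul u₁ ((P⁻¹)ᵀ * P⁻¹ * HB) ∈ GRSfrob q r (j₁ : ℕ) x y)
    (hj₂ : Matrix.vecMul u₂ ((P⁻¹)ᵀ * P⁻¹ * HB) ∈ GRSfrob q r (j₂ : ℕ) x y) :
    ∃! l : Fin m, ∃ j : Fin m,
      Matrix.vecMul u₁ ((P⁻¹)ᵀ * P⁻¹ * HB) ∈ GRSfrob q r (j : ℕ) x y ∧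
      Matrix.vecMul
          (Matrix.vecMul (fun p => u₂ p ^ q ^ (l : ℕ)) (shiftS F m r ^ (l : ℕ)))
          ((P⁻¹)ᵀ * P⁻¹ * HB) ∈ GRSfrob q r (j : ℕ) x y := by
  obtain ⟨p, e, hp, he, hqe⟩ := hq
  have hm : 0 < m := Nat.pos_of_ne_zero (NeZero.ne m)
  have hq0 : q ≠ 0 := by rw [hqe]; exact pow_ne_zero _ hp.pos.ne'
  haveI : CharP F p := aux_charP_of_card hp he hm (by rw [← hqe]; exact hF)
  haveI : ExpChar F p := ExpChar.prime hp
  have hφ : ∀ (k : ℕ) (a : F), iterateFrobenius F p (e * k) a = a ^ q ^ k := fun k a => by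
    rw [iterateFrobenius_def, hqe, ← pow_mul]
  set φ := iterateFrobenius F p e with hφdef
  have hφ1 : ∀ a : F, φ a = a ^ q := fun a => by
    rw [hφdef, iterateFrobenius_def, hqe]
  have hdet : IsUnit P.det := (Matrix.isUnit_iff_isUnit_det P).mp hPunit
  have hQP : P⁻¹ * P = 1 := Matrix.nonsing_inv_mul P hdet
  have hPQ : P * P⁻¹ = 1 := Matrix.mul_nonsing_inv P hdet
  set N := (P⁻¹)ᵀ * P⁻¹ * HB with hNdef
  have hNA : N = (P⁻¹)ᵀ * HA := by
    rw [hNdef, Matrix.mul_assoc, hPchange, ← Matrix.mul_assoc (P⁻¹), hQP, Matrix.one_mul]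
  have hmod : ∀ (a : Fin m) (k : ℕ), ((a + (k : Fin m) : Fin m) : ℕ) = ((a : ℕ) + k) % m := by
    intro a k
    rw [Fin.val_add, Fin.val_natCast]
    conv_rhs => rw [Nat.add_mod]
    rw [Nat.mod_eq_of_lt a.isLt]
  have hmod1 : ∀ a : Fin m, ((a + 1 : Fin m) : ℕ) = ((a : ℕ) + 1) % m := by
    intro a
    have := hmod a 1
    rwa [Nat.cast_one] at this
  have hσA : ∀ (pp : Fin m × Fin r) (t : Fin nn), A (pp.1 + 1, pp.2) t = (A pp t) ^ q := by
    intro pp t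
    rw [hA]
    show (x t ^ ((pp.2 : Fin r) : ℕ) * y t) ^ q ^ ((pp.1 + 1 : Fin m) : ℕ)
      = ((x t ^ ((pp.2 : Fin r) : ℕ) * y t) ^ q ^ ((pp.1 : Fin m) : ℕ)) ^ q
    rw [hmod1, ← aux_pow_q_mod hF, pow_succ, pow_mul]
  have hσb : ∀ (pp : Fin m × Fin r) (t : Fin nn), b (pp.1 + 1, pp.2) t = (b pp t) ^ q := by
    intro pp t
    rw [hb]
    show (β pp.2 t) ^ q ^ ((pp.1 + 1 : Fin m) : ℕ) = ((β pp.2 t) ^ q ^ ((pp.1 : Fin m) : ℕ)) ^ q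
    rw [hmod1, ← aux_pow_q_mod hF, pow_succ, pow_mul]
  have hmapA : HA.map φ = shiftS F m r * HA := by
    ext pp t
    rw [Matrix.map_apply, aux_shiftS_mul, hφ1]
    simp only [hHA, Matrix.of_apply]
    exact (hσA pp t).symm
  have hmapB : HB.map φ = shiftS F m r * HB := by
    ext pp t
    rw [Matrix.map_apply, aux_shiftS_mul, hφ1]
    simp only [hHB, Matrix.of_apply]
    exact (hσb pp t).symm
  have hAind' := Fintype.linearIndependent_iff.mp hAind
  have hcancel : ∀ M M' : Matrix (Fin m × Fin r) (Fin m × Fin r) F,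
      M * HA = M' * HA → M = M' := by
    intro M M' h
    ext pp pp'
    have h0 := hAind' (fun k => M pp k - M' pp k) ?_ pp'
    · exact sub_eq_zero.mp h0
    · funext t
      have hh := congrFun (congrFun h pp) t
      rw [Matrix.mul_apply, Matrix.mul_apply] at hh
      simp only [hHA, Matrix.of_apply] at hh
      simp only [Finset.sum_apply, Pi.smul_apply, smul_eq_mul, Pi.zero_apply, sub_mul]
      rw [Finset.sum_sub_distrib, hh, sub_self]
  have hSP : shiftS F m r * P = P.map φ * shiftS F m r := by
    apply hcancel
    calc shiftS F m r * P * HA = shiftS F m r * (P * HA) := Matrix.mul_assoc _ _ _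
      _ = shiftS F m r * HB := by rw [← hPchange]
      _ = HB.map φ := hmapB.symm
      _ = (P * HA).map φ := by rw [hPchange]
      _ = P.map φ * HA.map φ := Matrix.map_mul
      _ = P.map φ * (shiftS F m r * HA) := by rw [hmapA]
      _ = P.map φ * shiftS F m r * HA := (Matrix.mul_assoc _ _ _).symm
  have hQPφ : (P⁻¹).map φ * P.map φ = 1 := by
    rw [← Matrix.map_mul, hQP, Matrix.map_one φ (map_zero φ) (map_one φ)]
  have hSQ : (P⁻¹).map φ * shiftS F m r = shiftS F m r * P⁻¹ := by
    have h1 : (P⁻¹).map φ * (shiftS F m r * (P * P⁻¹))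
        = (P⁻¹).map φ * (P.map φ * (shiftS F m r * P⁻¹)) := by
      rw [← Matrix.mul_assoc (shiftS F m r) P (P⁻¹), hSP, Matrix.mul_assoc (P.map φ)]
    rw [hPQ, Matrix.mul_one] at h1
    rw [← Matrix.mul_assoc, hQPφ, Matrix.one_mul] at h1
    exact h1
  have hSST : shiftS F m r * (shiftS F m r)ᵀ = 1 := aux_shiftS_mul_transpose
  have hSTS : (shiftS F m r)ᵀ * shiftS F m r = 1 := mul_eq_one_comm.mp hSST
  have h2T := congrArg Matrix.transpose hSQ
  rw [Matrix.transpose_mul, Matrix.transpose_mul] at h2T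
  have hSQT : ((P⁻¹).map φ)ᵀ * shiftS F m r = shiftS F m r * (P⁻¹)ᵀ := by
    calc ((P⁻¹).map φ)ᵀ * shiftS F m r
        = (shiftS F m r * (shiftS F m r)ᵀ) * ((P⁻¹).map φ)ᵀ * shiftS F m r := by
          rw [hSST, Matrix.one_mul]
      _ = shiftS F m r * ((shiftS F m r)ᵀ * ((P⁻¹).map φ)ᵀ) * shiftS F m r := by
          rw [Matrix.mul_assoc (shiftS F m r) (shiftS F m r)ᵀ]
      _ = shiftS F m r * ((P⁻¹)ᵀ * (shiftS F m r)ᵀ) * shiftS F m r := by rw [h2T]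
      _ = shiftS F m r * (P⁻¹)ᵀ * ((shiftS F m r)ᵀ * shiftS F m r) := by
          simp only [Matrix.mul_assoc]
      _ = shiftS F m r * (P⁻¹)ᵀ := by rw [hSTS, Matrix.mul_one]
  have hmapN : N.map φ = shiftS F m r * N := by
    rw [hNA, Matrix.map_mul, Matrix.transpose_map, hmapA, ← Matrix.mul_assoc, hSQT,
      Matrix.mul_assoc]
  have hNfrob : ∀ (k : ℕ) (pp : Fin m × Fin r) (t : Fin nn),
      N (pp.1 + (k : Fin m), pp.2) t = (N pp t) ^ q ^ k := by
    intro k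
    induction k with
    | zero => intro pp t; simp
    | succ k ih =>
      intro pp t
      have h1 : N (pp.1 + ((k + 1 : ℕ) : Fin m), pp.2) t
          = N ((pp.1 + (k : Fin m)) + 1, pp.2) t := by
        congr 2
        push_cast
        ring
      rw [h1]
      have h2 := congrFun (congrFun hmapN ((pp.1 + (k : Fin m)), pp.2)) t
      rw [Matrix.map_apply, hφ1, aux_shiftS_mul] at h2
      dsimp only at h2
      rw [← h2, ih pp t, ← pow_mul, ← pow_succ]
  have hvec : ∀ (k : ℕ) (u : Fin m × Fin r → F),
      Matrix.vecMul (Matrix.vecMul (fun pp => u pp ^ q ^ k) (shiftS F m r ^ k)) N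
        = fun t => (Matrix.vecMul u N t) ^ q ^ k := by
    intro k u
    funext t
    rw [Matrix.vecMul_vecMul]
    have hψ : ∀ a : F, a ^ q ^ k = iterateFrobenius F p (e * k) a := fun a => (hφ k a).symm
    simp only [Matrix.vecMul, dotProduct]
    conv_rhs => rw [hψ, map_sum]
    apply Finset.sum_congr rfl
    intro pp _
    rw [aux_shiftS_pow_mul, hNfrob k pp t, _root_.map_mul, ← hψ, ← hψ]
  have hvecne : ∀ u : Fin m × Fin r → F, u ≠ 0 → Matrix.vecMul u N ≠ 0 := by
    intro u hu hcon
    apply hu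
    have h1 : Matrix.vecMul (Matrix.vecMul u (P⁻¹)ᵀ) HA = 0 := by
      rw [Matrix.vecMul_vecMul, ← hNA, hcon]
    have h2 : ∀ pp, Matrix.vecMul u (P⁻¹)ᵀ pp = 0 := by
      apply hAind'
      funext t
      have h3 := congrFun h1 t
      simp only [Matrix.vecMul, dotProduct, Pi.zero_apply, hHA, Matrix.of_apply] at h3
      simp only [Finset.sum_apply, Pi.smul_apply, smul_eq_mul, Pi.zero_apply]
      simpa [Matrix.vecMul, dotProduct] using h3
    have h3 : Matrix.vecMul u (P⁻¹)ᵀ = 0 := funext h2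
    have h4 := congrArg (fun v => Matrix.vecMul v Pᵀ) h3
    rw [Matrix.vecMul_vecMul, ← Matrix.transpose_mul, hPQ, Matrix.transpose_one,
      Matrix.vecMul_one, Matrix.zero_vecMul] at h4
    exact h4
  have hzero_mem : ∀ j : Fin m, (0 : Fin nn → F) ∈ GRSfrob q r (j : ℕ) x y := by
    intro j
    refine ⟨0, ?_, ?_⟩
    · rw [Polynomial.degree_zero]
      exact_mod_cast WithBot.bot_lt_coe r
    · funext t
      simp [zero_pow (pow_ne_zero _ hq0)]
  have hneg_mem : ∀ (j : Fin m) (w : Fin nn → F), w ∈ GRSfrob q r (j : ℕ) x y →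
      -w ∈ GRSfrob q r (j : ℕ) x y := by
    rintro j w ⟨Pol, hdeg, hw⟩
    refine ⟨-Pol, by rwa [Polynomial.degree_neg], ?_⟩
    funext t
    simp only [Pi.neg_apply, hw, Polynomial.eval_neg, mul_neg]
    have h5 : (-(y t * Polynomial.eval (x t) Pol)) ^ q ^ (j : ℕ)
        = -((y t * Polynomial.eval (x t) Pol) ^ q ^ (j : ℕ)) := by
      rw [← hφ (j : ℕ), ← hφ (j : ℕ), map_neg]
    rw [h5]
  have hdisj : ∀ (w : Fin nn → F) (a b' : Fin m), w ≠ 0 →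
      w ∈ GRSfrob q r (a : ℕ) x y → w ∈ GRSfrob q r (b' : ℕ) x y → a = b' := by
    intro w a b' hw hwa hwb
    by_contra hab
    have hc := hds (fun j => (if j = a then w else 0) + (if j = b' then -w else 0)) ?_ ?_ a
    · simp only [if_pos rfl, if_neg hab, add_zero] at hc
      exact hw hc
    · intro j
      by_cases h1 : j = a
      · subst h1
        simp only [if_pos rfl, if_neg hab, add_zero]
        exact hwa
      · by_cases h2 : j = b'
        · subst h2
          simp only [if_neg h1, if_pos rfl, zero_add]
          exact hneg_mem _ _ hwb
        · simp only [if_neg h1, if_neg h2, add_zero]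
          exact hzero_mem j
    · rw [Finset.sum_add_distrib, Finset.sum_ite_eq', Finset.sum_ite_eq']
      simp
  have hmem : ∀ (k : ℕ) (j : Fin m) (w : Fin nn → F), w ∈ GRSfrob q r (j : ℕ) x y →
      (fun t => w t ^ q ^ k) ∈ GRSfrob q r (((j + (k : Fin m)) : Fin m) : ℕ) x y := by
    rintro k j w ⟨Pol, hdeg, hw⟩
    refine ⟨Pol, hdeg, ?_⟩
    funext t
    simp only [hw]
    rw [← pow_mul, ← pow_add, aux_pow_q_mod hF _ ((j : ℕ) + k),
      aux_pow_q_mod hF _ (((j + (k : Fin m)) : Fin m) : ℕ)]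
    congr 2
    rw [hmod j k, Nat.mod_mod_of_dvd _ dvd_rfl]
  refine ⟨j₁ - j₂, ⟨j₁, hj₁, ?_⟩, ?_⟩
  · rw [hvec ((j₁ - j₂ : Fin m) : ℕ) u₂]
    have hmem2 := hmem ((j₁ - j₂ : Fin m) : ℕ) j₂ _ hj₂
    rw [Fin.cast_val_eq_self] at hmem2
    have heq : j₂ + (j₁ - j₂) = j₁ := by ring
    rwa [heq] at hmem2
  · rintro l' ⟨j', hj'₁, hj'₂⟩
    have hj'j₁ : j' = j₁ := hdisj _ j' j₁ (hvecne u₁ hu₁) hj'₁ hj₁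
    rw [hvec (l' : ℕ) u₂] at hj'₂
    have hfne : (fun t => Matrix.vecMul u₂ N t ^ q ^ (l' : ℕ)) ≠ 0 := by
      intro hcon
      apply hvecne u₂ hu₂
      funext t
      have h6 := congrFun hcon t
      simp only [Pi.zero_apply] at h6
      exact (pow_eq_zero_iff (pow_ne_zero _ hq0)).mp h6
    have hmem2 := hmem (l' : ℕ) j₂ _ hj₂
    rw [Fin.cast_val_eq_self] at hmem2
    have h7 : j₂ + l' = j' := hdisj _ _ _ hfne hmem2 hj'₂
    rw [hj'j₁] at h7
    exact eq_sub_of_add_eq' h7
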